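/- A vector y ∈ ℝ^{P_1(N)} satisfies y({i}) ≥ 0 for all i; y(S)+y({i}) ≥ 0 for all |S|=2, i∈S; and y(S)+y({i})−y(S\{i}) ≥ 0 for all |S|≥3, i∈S, if and only if y is a non-negative linear combination of the vectors y_A, where A ranges over nonempty classes of nonempty subsets of N closed under supersets and y_A(T) = 1_{T∈A} − |{j : {j}∈A, {j}⊊T}|. -/

import Mathlib

open Finset

section Aux

variable {V : Type*} [Fintype V] [DecidableEq V]

private def zf (y : Finset V → ℝ) (T : Finset V) : ℝ :=
  y T + ∑ j ∈ univ.filter (fun j => ({j} : Finset V) ⊂ T), y {j}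

private lemma filt_singleton (i : V) :
    univ.filter (fun j => ({j} : Finset V) ⊂ ({i} : Finset V)) = ∅ := by
  ext j; simp [Finset.ssubset_singleton_iff]

private lemma filt_big {T : Finset V} (hT : 2 ≤ T.card) :
    univ.filter (fun j => ({j} : Finset V) ⊂ T) = T := by
  ext j
  simp only [mem_filter, mem_univ, true_and]
  constructor
  · intro h
    exact h.subset (mem_singleton_self j)
  · intro hj
    refine Finset.ssubset_iff_subset_ne.mpr ⟨singleton_subset_iff.mpr hj, ?_⟩
    intro h
    rw [← h] at hT
    simp at hT

private lemma zf_singleton (y : Finset V → ℝ) (i : V) : zf y {i} = y {i} := by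
  simp [zf, filt_singleton]

private lemma zf_big (y : Finset V → ℝ) {T : Finset V} (hT : 2 ≤ T.card) :
    zf y T = y T + ∑ j ∈ T, y {j} := by
  rw [zf, filt_big hT]

private lemma diff2 (y : Finset V → ℝ) {S : Finset V} (hS : S.card = 2) {i : V} (hi : i ∈ S) :
    zf y S - zf y (S.erase i) = y S + y {i} := by
  have hc : (S.erase i).card = 1 := by rw [Finset.card_erase_of_mem hi, hS]
  obtain ⟨k, hk⟩ := Finset.card_eq_one.mp hc
  have hik : i ≠ k := by
    intro h; subst h
    have := Finset.notMem_erase i S; rw [hk] at this; simp at this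
  have hSik : S = insert i {k} := by
    rw [← hk, Finset.insert_erase hi]
  rw [zf_big y (le_of_eq hS.symm), hk, zf_singleton, hSik,
    Finset.sum_insert (by simp [hik])]
  simp
  ring

private lemma diff3 (y : Finset V → ℝ) {S : Finset V} (hS : 3 ≤ S.card) {i : V} (hi : i ∈ S) :
    zf y S - zf y (S.erase i) = y S + y {i} - y (S.erase i) := by
  have hc : (S.erase i).card = S.card - 1 := Finset.card_erase_of_mem hi
  have hc2 : 2 ≤ (S.erase i).card := by omega
  rw [zf_big y (by omega), zf_big y hc2]
  have hSi : S = insert i (S.erase i) := (Finset.insert_erase hi).symm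
  nth_rewrite 2 [hSi]
  rw [Finset.sum_insert (Finset.notMem_erase i S)]
  ring

omit [Fintype V] in
private lemma mono_of_steps (z : Finset V → ℝ)
    (hstep : ∀ S : Finset V, 2 ≤ S.card → ∀ i ∈ S, z (S.erase i) ≤ z S) :
    ∀ T : Finset V, ∀ S : Finset V, S.Nonempty → S ⊆ T → z S ≤ z T := by
  intro T
  induction T using Finset.strongInduction with
  | _ T ih =>
    intro S hS hST
    rcases eq_or_ssubset_of_subset hST with rfl | hss
    · exact le_refl _
    · obtain ⟨i, hiT, hiS⟩ := Finset.exists_of_ssubset hss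
      have hsub : S ⊆ T.erase i := fun x hx =>
        Finset.mem_erase.mpr ⟨fun h => hiS (h ▸ hx), hST hx⟩
      have h1 : z S ≤ z (T.erase i) := ih _ (Finset.erase_ssubset hiT) S hS hsub
      have h2 : 2 ≤ T.card := by
        obtain ⟨a, ha⟩ := hS
        exact Finset.one_lt_card.mpr ⟨i, hiT, a, hST ha, fun h => hiS (h ▸ ha)⟩
      exact h1.trans (hstep T h2 i hiT)

private def ValidA (A : Finset (Finset V)) : Prop :=
  A.Nonempty ∧ (∀ S ∈ A, S.Nonempty) ∧ (∀ S ∈ A, ∀ T : Finset V, S ⊆ T → T ∈ A)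

private lemma decomp : ∀ (n : ℕ) (z : Finset V → ℝ),
    (univ.filter (fun T : Finset V => T.Nonempty ∧ 0 < z T)).card = n →
    (∀ T : Finset V, T.Nonempty → 0 ≤ z T) →
    (∀ S T : Finset V, S.Nonempty → S ⊆ T → z S ≤ z T) →
    ∃ lam : Finset (Finset V) → ℝ,
      (∀ A, 0 ≤ lam A) ∧
      (∀ A, ¬ ValidA A → lam A = 0) ∧
      (∀ T : Finset V, T.Nonempty →
        z T = ∑ A : Finset (Finset V), lam A * (if T ∈ A then (1:ℝ) else 0)) := by
  intro n
  induction n using Nat.strong_induction_on with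
  | _ n ih =>
    intro z hcard hnn hmono
    by_cases hemp : (univ.filter (fun T : Finset V => T.Nonempty ∧ 0 < z T)) = ∅
    · refine ⟨fun _ => 0, fun _ => le_refl _, fun _ _ => rfl, fun T hT => ?_⟩
      have : ¬ (0 < z T) := by
        intro h
        have : T ∈ univ.filter (fun T : Finset V => T.Nonempty ∧ 0 < z T) := by
          simp [hT, h]
        rw [hemp] at this; simp at this
      have := hnn T hT
      simp only [zero_mul, Finset.sum_const_zero]
      linarith
    · have hne : (univ.filter (fun T : Finset V => T.Nonempty ∧ 0 < z T)).Nonempty :=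
        Finset.nonempty_of_ne_empty hemp
      obtain ⟨T₀, hT₀mem, hT₀min⟩ := Finset.exists_min_image _ z hne
      simp only [mem_filter, mem_univ, true_and] at hT₀mem
      set m := z T₀ with hm
      have hmpos : 0 < m := hT₀mem.2
      set A₀ : Finset (Finset V) :=
        univ.filter (fun T : Finset V => T.Nonempty ∧ 0 < z T) with hA₀
      have hmemA₀ : ∀ T : Finset V, T ∈ A₀ ↔ (T.Nonempty ∧ 0 < z T) := by
        intro T; simp [hA₀]
      have hvalid : ValidA A₀ := by
        refine ⟨⟨T₀, (hmemA₀ T₀).mpr hT₀mem⟩, fun S hS => ((hmemA₀ S).mp hS).1, ?_⟩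
        intro S hS T hST
        obtain ⟨hSne, hSpos⟩ := (hmemA₀ S).mp hS
        exact (hmemA₀ T).mpr ⟨hSne.mono hST, lt_of_lt_of_le hSpos (hmono S T hSne hST)⟩
      set z' : Finset V → ℝ := fun T => z T - (if T ∈ A₀ then m else 0) with hz'
      have hz'val : ∀ T : Finset V, T.Nonempty → ¬ T ∈ A₀ → z T = 0 := by
        intro T hT hTA
        have := hnn T hT
        rcases this.lt_or_eq with h | h
        · exact absurd ((hmemA₀ T).mpr ⟨hT, h⟩) hTA
        · exact h.symm
      have hz'nn : ∀ T : Finset V, T.Nonempty → 0 ≤ z' T := by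
        intro T hT
        by_cases h : T ∈ A₀
        · have hle := hT₀min T h
          simp only [hz', if_pos h]
          linarith
        · simp only [hz', if_neg h, sub_zero]
          exact hnn T hT
      have hz'mono : ∀ S T : Finset V, S.Nonempty → S ⊆ T → z' S ≤ z' T := by
        intro S T hS hST
        by_cases hSA : S ∈ A₀
        · have hTA : T ∈ A₀ := hvalid.2.2 S hSA T hST
          simp only [hz', hSA, hTA, if_pos]
          linarith [hmono S T hS hST]
        · have : z S = 0 := hz'val S hS hSA
          have h0 : z' S = 0 := by simp [hz', hSA, this]
          rw [h0]
          exact hz'nn T (hS.mono hST)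
      have hT₀new : z' T₀ = 0 := by
        simp [hz', (hmemA₀ T₀).mpr hT₀mem]
        exact sub_eq_zero.mpr hm.symm
      have hsub : (univ.filter (fun T : Finset V => T.Nonempty ∧ 0 < z' T)) ⊂ A₀ := by
        refine ⟨fun T hT => ?_, fun hcon => ?_⟩
        · simp only [mem_filter, mem_univ, true_and] at hT
          by_contra hTA
          have := hz'val T hT.1 hTA
          have : z' T = z T := by simp [hz', hTA]
          rw [this] at hT
          exact absurd ((hmemA₀ T).mpr ⟨hT.1, hT.2⟩) hTA
        · have := hcon ((hmemA₀ T₀).mpr hT₀mem)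
          simp only [mem_filter, mem_univ, true_and] at this
          linarith [this.2, hT₀new.ge]
      have hlt : (univ.filter (fun T : Finset V => T.Nonempty ∧ 0 < z' T)).card < n := by
        rw [← hcard]
        exact Finset.card_lt_card hsub
      obtain ⟨lam', hlam'nn, hlam'supp, hlam'eq⟩ :=
        ih _ hlt z' rfl hz'nn hz'mono
      refine ⟨fun A => lam' A + (if A = A₀ then m else 0), ?_, ?_, ?_⟩
      · intro A
        by_cases h : A = A₀ <;> simp [h] <;> linarith [hlam'nn A₀, hlam'nn A]
      · intro A hA
        have h1 := hlam'supp A hA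
        have h2 : A ≠ A₀ := fun h => hA (h ▸ hvalid)
        simp [h1, h2]
      · intro T hT
        have := hlam'eq T hT
        have hz : z T = z' T + (if T ∈ A₀ then m else 0) := by simp [hz']
        rw [hz, this]
        have hsplit : ∀ A : Finset (Finset V),
            (lam' A + if A = A₀ then m else 0) * (if T ∈ A then (1:ℝ) else 0)
            = lam' A * (if T ∈ A then (1:ℝ) else 0)
              + (if A = A₀ then (if T ∈ A₀ then m else 0) else 0) := by
          intro A
          by_cases h : A = A₀
          · subst h; by_cases h2 : T ∈ A₀ <;> simp [h2]
          · simp [h]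
        rw [Finset.sum_congr rfl fun A _ => hsplit A, Finset.sum_add_distrib,
          Finset.sum_ite_eq' Finset.univ A₀ (fun _ => if T ∈ A₀ then m else 0)]
        simp

private lemma card_count (A : Finset (Finset V)) (T : Finset V) :
    ∑ j ∈ univ.filter (fun j => ({j} : Finset V) ⊂ T),
        (if ({j} : Finset V) ∈ A then (1:ℝ) else 0)
    = ((univ.filter (fun j : V => ({j} : Finset V) ∈ A ∧ ({j} : Finset V) ⊂ T)).card : ℝ) := by
  rw [Finset.sum_boole, Finset.filter_filter]
  congr 2
  ext j
  simp only [mem_filter, mem_univ, true_and]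
  exact and_comm

end Aux


/-- A vector `y ∈ ℝ^{P_1(N)}` satisfies the inequalities (a1)–(a3) iff it is a
non-negative linear combination of the vectors `y_A`, where `A` ranges over the
nonempty classes of nonempty subsets of `N` closed under supersets and
`y_A(T) = 1_{T∈A} − |{j : {j} ∈ A, {j} ⊊ T}|`. -/
theorem stmt_15 {V : Type*} [Fintype V] [DecidableEq V]
    (hN : 2 ≤ Fintype.card V)
    (y : Finset V → ℝ) :
    ((∀ i : V, 0 ≤ y {i}) ∧
     (∀ S : Finset V, S.card = 2 → ∀ i ∈ S, 0 ≤ y S + y {i}) ∧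
     (∀ S : Finset V, 3 ≤ S.card → ∀ i ∈ S, 0 ≤ y S + y {i} - y (S.erase i)))
    ↔
    ∃ lam : Finset (Finset V) → ℝ,
      (∀ A, 0 ≤ lam A) ∧
      (∀ A : Finset (Finset V),
        ¬ (A.Nonempty ∧ (∀ S ∈ A, S.Nonempty) ∧
            (∀ S ∈ A, ∀ T : Finset V, S ⊆ T → T ∈ A)) → lam A = 0) ∧
      (∀ T : Finset V, T.Nonempty →
        y T = ∑ A : Finset (Finset V),
          lam A * ((if T ∈ A then (1 : ℝ) else 0)
            - ((Finset.univ.filter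
                (fun j : V => ({j} : Finset V) ∈ A ∧ ({j} : Finset V) ⊂ T)).card : ℝ))) := by
  constructor
  · rintro ⟨h1, h2, h3⟩
    have hstep : ∀ S : Finset V, 2 ≤ S.card → ∀ i ∈ S, zf y (S.erase i) ≤ zf y S := by
      intro S hS i hi
      rcases eq_or_lt_of_le hS with h | h
      · have := diff2 y h.symm hi
        have := h2 S h.symm i hi
        linarith
      · have := diff3 y h hi
        have := h3 S h i hi
        linarith
    have hmono : ∀ S T : Finset V, S.Nonempty → S ⊆ T → zf y S ≤ zf y T :=
      fun S T hS hST => mono_of_steps (zf y) hstep T S hS hST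
    have hnn : ∀ T : Finset V, T.Nonempty → 0 ≤ zf y T := by
      intro T hT
      obtain ⟨i, hi⟩ := hT
      have h0 : zf y {i} ≤ zf y T :=
        hmono {i} T (Finset.singleton_nonempty i) (Finset.singleton_subset_iff.mpr hi)
      have := h1 i
      rw [zf_singleton] at h0
      linarith
    obtain ⟨lam, hlamnn, hlamsupp, hlameq⟩ := decomp _ (zf y) rfl hnn hmono
    refine ⟨lam, hlamnn, fun A hA => hlamsupp A hA, ?_⟩
    intro T hT
    have hsing : ∀ j : V, y {j}
        = ∑ A : Finset (Finset V), lam A * (if ({j} : Finset V) ∈ A then (1:ℝ) else 0) := by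
      intro j
      rw [← zf_singleton y j]
      exact hlameq {j} (Finset.singleton_nonempty j)
    have key : y T = zf y T - ∑ j ∈ univ.filter (fun j => ({j} : Finset V) ⊂ T), y {j} := by
      rw [zf]; ring
    rw [key, hlameq T hT,
      Finset.sum_congr rfl (fun j _ => hsing j), Finset.sum_comm,
      ← Finset.sum_sub_distrib]
    refine Finset.sum_congr rfl fun A _ => ?_
    rw [← Finset.mul_sum, card_count, ← mul_sub]
  · rintro ⟨lam, hlamnn, hlamsupp, heq⟩
    have hsupp : ∀ A : Finset (Finset V), ¬ ValidA A → lam A = 0 := fun A hA => hlamsupp A hA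
    have hsing : ∀ j : V, y {j}
        = ∑ A : Finset (Finset V), lam A * (if ({j} : Finset V) ∈ A then (1:ℝ) else 0) := by
      intro j
      rw [heq {j} (Finset.singleton_nonempty j)]
      refine Finset.sum_congr rfl fun A _ => ?_
      have : (univ.filter
          (fun i : V => ({i} : Finset V) ∈ A ∧ ({i} : Finset V) ⊂ ({j} : Finset V))) = ∅ := by
        ext i; simp [Finset.ssubset_singleton_iff]
      rw [this]
      simp
    have hz : ∀ T : Finset V, T.Nonempty →
        zf y T = ∑ A : Finset (Finset V), lam A * (if T ∈ A then (1:ℝ) else 0) := by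
      intro T hT
      rw [zf, heq T hT, Finset.sum_congr rfl (fun j _ => hsing j), Finset.sum_comm,
        ← Finset.sum_add_distrib]
      refine Finset.sum_congr rfl fun A _ => ?_
      rw [← Finset.mul_sum, card_count, ← mul_add]
      ring_nf
    have hmono : ∀ S T : Finset V, S.Nonempty → S ⊆ T → zf y S ≤ zf y T := by
      intro S T hS hST
      rw [hz S hS, hz T (hS.mono hST)]
      refine Finset.sum_le_sum fun A _ => ?_
      by_cases hA : ValidA A
      · refine mul_le_mul_of_nonneg_left ?_ (hlamnn A)
        by_cases hSA : S ∈ A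
        · simp [hSA, hA.2.2 S hSA T hST]
        · by_cases hTA : T ∈ A <;> simp [hSA, hTA]
      · simp [hsupp A hA]
    refine ⟨?_, ?_, ?_⟩
    · intro i
      rw [hsing i]
      refine Finset.sum_nonneg fun A _ => ?_
      by_cases h : ({i} : Finset V) ∈ A <;> simp [h, hlamnn A]
    · intro S hS i hi
      have hd := diff2 y hS hi
      have hne : (S.erase i).Nonempty := by
        rw [← Finset.card_pos, Finset.card_erase_of_mem hi, hS]
        norm_num
      have := hmono (S.erase i) S hne (Finset.erase_subset i S)
      linarith
    · intro S hS i hi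
      have hd := diff3 y hS hi
      have hne : (S.erase i).Nonempty := by
        rw [← Finset.card_pos, Finset.card_erase_of_mem hi]
        omega
      have := hmono (S.erase i) S hne (Finset.erase_subset i S)
      linarith
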